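/- Let n ≥ 2, let 𝕂 be a field, and let G be a quotient of Γₙ, i.e. there exists a surjective group homomorphism Γₙ → G. Then every finite-dimensional absolutely simple 𝕂G-module has dimension at most two. -/

import Mathlib

open scoped TensorProduct

/-- The defining relations of the group
`Γₙ = ⟨g, h, ε ∣ hg = εgh, gε = ε⁻¹g, hε = εh, εⁿ = 1⟩`,
with generators `0 ↦ g`, `1 ↦ h`, `2 ↦ ε`. -/
def GammaRels (n : ℕ) : Set (FreeGroup (Fin 3)) :=
  { FreeGroup.of 1 * FreeGroup.of 0 * (FreeGroup.of 2 * FreeGroup.of 0 * FreeGroup.of 1)⁻¹,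
    FreeGroup.of 0 * FreeGroup.of 2 * ((FreeGroup.of 2)⁻¹ * FreeGroup.of 0)⁻¹,
    FreeGroup.of 1 * FreeGroup.of 2 * (FreeGroup.of 2 * FreeGroup.of 1)⁻¹,
    (FreeGroup.of 2) ^ n }

/-- The group `Γₙ = ⟨g, h, ε ∣ hg = εgh, gε = ε⁻¹g, hε = εh, εⁿ = 1⟩`. -/
def Gamma (n : ℕ) : Type := PresentedGroup (GammaRels n)

instance (n : ℕ) : Group (Gamma n) := inferInstanceAs (Group (PresentedGroup (GammaRels n)))

/-- The base change of a representation along a field extension `K ⊆ L`. -/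
noncomputable def repBaseChange {K : Type} [Field K] (L : Type) [Field L] [Algebra K L]
    {G : Type} [Group G] {V : Type} [AddCommGroup V] [Module K V]
    (ρ : Representation K G V) : Representation L G (L ⊗[K] V) where
  toFun g := LinearMap.baseChange L (ρ g)
  map_one' := by
    ext v
    simp
  map_mul' g h := by
    ext v
    simp

/-- A finite-dimensional representation is absolutely simple if all its base changes to
field extensions of `K` are simple. -/
def IsAbsolutelySimpleRep (K : Type) [Field K] (G : Type) [Group G]
    {V : Type} [AddCommGroup V] [Module K V] (ρ : Representation K G V) : Prop :=
  ∀ (L : Type) [Field L] [Algebra K L],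
    IsSimpleModule (MonoidAlgebra L G) (repBaseChange L ρ).asModule

section Aux
variable {L : Type} [Field L] {G : Type} [Group G] {V : Type} [AddCommGroup V] [Module L V]

lemma aux_bot_or_top (σ : Representation L G V)
    (hs : IsSimpleModule (MonoidAlgebra L G) σ.asModule)
    (p : Submodule L V) (hp : ∀ x : G, ∀ v ∈ p, σ x v ∈ p) : p = ⊥ ∨ p = ⊤ := by
  classical
  let q : Submodule (MonoidAlgebra L G) σ.asModule :=
    { carrier := (p : Set V)
      add_mem' := fun {x y} hx hy => p.add_mem hx hy
      zero_mem' := p.zero_mem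
      smul_mem' := by
        intro c v hv
        show σ.asAlgebraHom c v ∈ p
        induction c using MonoidAlgebra.induction with
        | zero => simp only [map_zero]; exact p.zero_mem
        | single_add g r cf hg hr ih =>
          rw [map_add]
          refine p.add_mem ?_ ih
          have : σ.asAlgebraHom (MonoidAlgebra.single g r) v = r • σ g v := by
            rw [Representation.asAlgebraHom_single]; rfl
          rw [this]
          exact p.smul_mem r (hp g v hv) }
  rcases eq_bot_or_eq_top q with h | h
  · left
    rw [Submodule.eq_bot_iff]
    intro v hv
    exact (Submodule.eq_bot_iff q).mp h v hv
  · right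
    rw [Submodule.eq_top_iff']
    intro v
    exact Submodule.eq_top_iff'.mp h v

lemma aux_scalar [IsAlgClosed L] [FiniteDimensional L V] (σ : Representation L G V)
    (hs : IsSimpleModule (MonoidAlgebra L G) σ.asModule)
    (T : Module.End L V) (hT : ∀ x : G, σ x * T = T * σ x) : ∃ μ : L, T = μ • 1 := by
  have hnt : Nontrivial V := IsSimpleModule.nontrivial (MonoidAlgebra L G) σ.asModule
  obtain ⟨μ, hμ⟩ := Module.End.exists_eigenvalue T
  have hker : LinearMap.ker (T - μ • 1) ≠ ⊥ := by
    rw [← Module.End.eigenspace_def]; exact hμ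
  have hinv : ∀ x : G, ∀ v ∈ LinearMap.ker (T - μ • 1), σ x v ∈ LinearMap.ker (T - μ • 1) := by
    intro x v hv
    rw [LinearMap.mem_ker] at hv ⊢
    have : (T - μ • 1) (σ x v) = σ x ((T - μ • 1) v) := by
      simp only [LinearMap.sub_apply, LinearMap.smul_apply, Module.End.one_apply, map_sub, map_smul]
      congr 1
      exact congrFun (congrArg DFunLike.coe (hT x).symm) v
    rw [this, hv, map_zero]
  rcases aux_bot_or_top σ hs _ hinv with h | h
  · exact absurd h hker
  · refine ⟨μ, ?_⟩
    have : T - μ • 1 = 0 := LinearMap.ker_eq_top.mp h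
    rwa [sub_eq_zero] at this

end Aux

section Rels
variable (n : ℕ)

lemma gamma_rel_one {r : FreeGroup (Fin 3)} (hr : r ∈ GammaRels n) :
    PresentedGroup.mk (GammaRels n) r = 1 :=
  (QuotientGroup.eq_one_iff _).mpr (Subgroup.subset_normalClosure hr)

lemma gamma_r1 : (PresentedGroup.of 1 * PresentedGroup.of 0 : Gamma n) =
    PresentedGroup.of 2 * PresentedGroup.of 0 * PresentedGroup.of 1 := by
  have h := gamma_rel_one n (Set.mem_insert _ _)
  rw [map_mul, map_mul, map_inv, map_mul, map_mul, mul_inv_eq_one] at h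
  exact h

lemma gamma_r2 : (PresentedGroup.of 0 * PresentedGroup.of 2 : Gamma n) =
    (PresentedGroup.of 2)⁻¹ * PresentedGroup.of 0 := by
  have h := gamma_rel_one n (Set.mem_insert_of_mem _ (Set.mem_insert _ _))
  rw [map_mul, map_mul, map_inv, map_mul, map_inv, mul_inv_eq_one] at h
  exact h

lemma gamma_r3 : (PresentedGroup.of 1 * PresentedGroup.of 2 : Gamma n) =
    PresentedGroup.of 2 * PresentedGroup.of 1 := by
  have h := gamma_rel_one n
    (Set.mem_insert_of_mem _ (Set.mem_insert_of_mem _ (Set.mem_insert _ _)))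
  rw [map_mul, map_mul, map_inv, map_mul, mul_inv_eq_one] at h
  exact h

end Rels

set_option maxHeartbeats 2000000 in
theorem stmt9 (n : ℕ) (hn : 2 ≤ n) (K : Type) [Field K] (G : Type) [Group G]
    (f : Gamma n →* G) (hf : Function.Surjective f)
    (V : Type) [AddCommGroup V] [Module K V] [FiniteDimensional K V]
    (ρ : Representation K G V) (hρ : IsAbsolutelySimpleRep K G ρ) :
    Module.finrank K V ≤ 2 := by
  classical
  let L := AlgebraicClosure K
  let W := L ⊗[K] V
  let σ : Representation L G W := repBaseChange L ρ
  have hsimp : IsSimpleModule (MonoidAlgebra L G) σ.asModule := hρ L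
  have hfd : FiniteDimensional L W := Module.Finite.base_change K L V
  have hnt : Nontrivial W := IsSimpleModule.nontrivial (MonoidAlgebra L G) σ.asModule
  -- the homomorphism from Gamma n to endomorphisms
  let φ : Gamma n →* Module.End L W := (σ : G →* Module.End L W).comp f
  let g0 : Gamma n := PresentedGroup.of 0
  let h0 : Gamma n := PresentedGroup.of 1
  let e0 : Gamma n := PresentedGroup.of 2
  let a : Module.End L W := φ g0
  let b : Module.End L W := φ h0
  let e : Module.End L W := φ e0
  let ainv : Module.End L W := φ g0⁻¹
  let binv : Module.End L W := φ h0⁻¹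
  let einv : Module.End L W := φ e0⁻¹
  have haainv : a * ainv = 1 := by rw [← map_mul, mul_inv_cancel, map_one]
  have hainva : ainv * a = 1 := by rw [← map_mul, inv_mul_cancel, map_one]
  have hbbinv : b * binv = 1 := by rw [← map_mul, mul_inv_cancel, map_one]
  have hbinvb : binv * b = 1 := by rw [← map_mul, inv_mul_cancel, map_one]
  have heeinv : e * einv = 1 := by rw [← map_mul, mul_inv_cancel, map_one]
  have heinve : einv * e = 1 := by rw [← map_mul, inv_mul_cancel, map_one]
  have hba : b * a = e * a * b := by
    rw [← map_mul, ← map_mul, ← map_mul]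
    exact congrArg φ (gamma_r1 n)
  have hae : a * e = einv * a := by
    rw [← map_mul, ← map_mul]
    exact congrArg φ (gamma_r2 n)
  have hbe : b * e = e * b := by
    rw [← map_mul, ← map_mul]
    exact congrArg φ (gamma_r3 n)
  have heae : e * a * e = a := by
    rw [mul_assoc, hae, ← mul_assoc, heeinv, one_mul]
  have haeinv : a * einv = e * a := by
    have h := congrArg (· * einv) heae
    simp only [mul_assoc, heeinv, mul_one] at h
    exact h.symm
  have ha2e : (a * a) * e = e * (a * a) := by
    calc (a * a) * e = a * (a * e) := by rw [mul_assoc]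
    _ = a * (einv * a) := by rw [hae]
    _ = (a * einv) * a := by rw [mul_assoc]
    _ = (e * a) * a := by rw [haeinv]
    _ = e * (a * a) := by rw [mul_assoc]
  have ha2b : (a * a) * b = b * (a * a) := by
    refine Eq.symm ?_
    calc b * (a * a) = (b * a) * a := by rw [mul_assoc]
    _ = (e * a * b) * a := by rw [hba]
    _ = e * a * (b * a) := by rw [mul_assoc]
    _ = e * a * (e * a * b) := by rw [hba]
    _ = ((e * a * e) * a) * b := by simp only [mul_assoc]
    _ = (a * a) * b := by rw [heae]
  -- a*a commutes with everything
  have hcommGamma : ∀ y : Gamma n, φ y * (a * a) = (a * a) * φ y := by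
    intro y
    let H : Subgroup (Gamma n) :=
      { carrier := {z | φ z * (a * a) = (a * a) * φ z}
        one_mem' := by simp [Set.mem_setOf_eq]
        mul_mem' := by
          intro x y hx hy
          simp only [Set.mem_setOf_eq] at hx hy ⊢
          rw [map_mul, mul_assoc, hy, ← mul_assoc, hx, mul_assoc]
        inv_mem' := by
          intro x hx
          simp only [Set.mem_setOf_eq] at hx ⊢
          have h1 : φ x⁻¹ * φ x = 1 := by rw [← map_mul, inv_mul_cancel, map_one]
          have h2 : φ x * φ x⁻¹ = 1 := by rw [← map_mul, mul_inv_cancel, map_one]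
          calc φ x⁻¹ * (a * a) = φ x⁻¹ * (a * a) * (φ x * φ x⁻¹) := by rw [h2, mul_one]
          _ = φ x⁻¹ * ((a * a) * φ x) * φ x⁻¹ := by simp only [mul_assoc]
          _ = φ x⁻¹ * (φ x * (a * a)) * φ x⁻¹ := by rw [hx]
          _ = (φ x⁻¹ * φ x) * ((a * a) * φ x⁻¹) := by simp only [mul_assoc]
          _ = (a * a) * φ x⁻¹ := by rw [h1, one_mul] }
    have := PresentedGroup.generated_by (GammaRels n) H ?_ y
    · exact this
    · intro j
      fin_cases j
      · show a * (a * a) = (a * a) * a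
        simp only [mul_assoc]
      · show b * (a * a) = (a * a) * b
        exact ha2b.symm
      · show e * (a * a) = (a * a) * e
        exact ha2e.symm
  have hcommG : ∀ x : G, σ x * (a * a) = (a * a) * σ x := by
    intro x
    obtain ⟨y, rfl⟩ := hf x
    exact hcommGamma y
  obtain ⟨lam, hlam⟩ := aux_scalar σ hsimp (a * a) hcommG
  have hlam0 : lam ≠ 0 := by
    rintro rfl
    rw [zero_smul] at hlam
    have h1 : (a * a) * (ainv * ainv) = 1 := by
      calc (a * a) * (ainv * ainv) = a * ((a * ainv) * ainv) := by simp only [mul_assoc]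
      _ = 1 := by rw [haainv, one_mul, haainv]
    rw [hlam, zero_mul] at h1
    obtain ⟨u, v, huv⟩ := hnt
    have hz : ∀ u : W, u = 0 := by
      intro u
      have : (0 : Module.End L W) u = u := by rw [h1]; rfl
      simpa using this.symm
    exact huv ((hz u).trans (hz v).symm)
  -- common eigenvector of b and e
  obtain ⟨c, hc⟩ := Module.End.exists_eigenvalue e
  have hEnt : Nontrivial (Module.End.eigenspace e c) := Submodule.nontrivial_iff_ne_bot.mpr hc
  have hbE : ∀ u ∈ Module.End.eigenspace e c, b u ∈ Module.End.eigenspace e c := by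
    intro u hu
    rw [Module.End.mem_eigenspace_iff] at hu ⊢
    calc e (b u) = (e * b) u := rfl
    _ = (b * e) u := by rw [hbe]
    _ = b (e u) := rfl
    _ = b (c • u) := by rw [hu]
    _ = c • b u := map_smul b c u
  obtain ⟨β, hβ⟩ := Module.End.exists_eigenvalue (K := L) (V := Module.End.eigenspace e c) (b.restrict hbE)
  obtain ⟨w', hw'⟩ := hβ.exists_hasEigenvector
  set w : W := (w' : W) with hwdef
  have hw0 : w ≠ 0 := fun hzero => hw'.2 (Subtype.ext hzero)
  have hew : e w = c • w := Module.End.mem_eigenspace_iff.mp w'.2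
  have hbw : b w = β • w := by
    have h := congrArg (Subtype.val) (Module.End.mem_eigenspace_iff.mp hw'.1)
    simpa [LinearMap.restrict_coe_apply] using h
  -- scalar-action helper
  have hscal : ∀ (M Minv : Module.End L W) (u : W) (t : L), Minv * M = 1 → u ≠ 0 →
      M u = t • u → t ≠ 0 ∧ Minv u = t⁻¹ • u := by
    intro M Minv u t hMM hu hMu
    have ht : t ≠ 0 := by
      rintro rfl
      rw [zero_smul] at hMu
      apply hu
      calc u = (Minv * M) u := by rw [hMM]; rfl
      _ = Minv (M u) := rfl
      _ = 0 := by rw [hMu, map_zero]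
    refine ⟨ht, ?_⟩
    have h2 : Minv (M u) = u := by
      calc Minv (M u) = (Minv * M) u := rfl
      _ = u := by rw [hMM]; rfl
    rw [hMu, map_smul] at h2
    calc Minv u = t⁻¹ • (t • Minv u) := by rw [smul_smul, inv_mul_cancel₀ ht, one_smul]
    _ = t⁻¹ • u := by rw [h2]
  have hcne := hscal e einv w c heinve hw0 hew
  have hawnz : a w ≠ 0 := by
    intro hzero
    apply hw0
    calc w = (ainv * a) w := by rw [hainva]; rfl
    _ = ainv (a w) := rfl
    _ = 0 := by rw [hzero, map_zero]
  have heaw : e (a w) = c⁻¹ • a w := by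
    calc e (a w) = (e * a) w := rfl
    _ = (a * einv) w := by rw [haeinv]
    _ = a (einv w) := rfl
    _ = a (c⁻¹ • w) := by rw [hcne.2]
    _ = c⁻¹ • a w := map_smul a _ _
  have hbaw : b (a w) = (β * c⁻¹) • a w := by
    calc b (a w) = (b * a) w := rfl
    _ = (e * a * b) w := by rw [hba]
    _ = e (a (b w)) := rfl
    _ = e (a (β • w)) := by rw [hbw]
    _ = β • e (a w) := by rw [map_smul, map_smul]
    _ = β • (c⁻¹ • a w) := by rw [heaw]
    _ = (β * c⁻¹) • a w := by rw [smul_smul]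
  have haw2 : a (a w) = lam • w := by
    calc a (a w) = (a * a) w := rfl
    _ = lam • w := by rw [hlam]; rfl
  have hbne := hscal b binv w β hbinvb hw0 hbw
  have hbawne := hscal b binv (a w) (β * c⁻¹) hbinvb hawnz hbaw
  have heawne := hscal e einv (a w) c⁻¹ heinve hawnz heaw
  have hainvw : ainv w = lam⁻¹ • a w := by
    have h1 : ainv (a (a w)) = a w := by
      calc ainv (a (a w)) = (ainv * a) (a w) := rfl
      _ = a w := by rw [hainva]; rfl
    rw [haw2, map_smul] at h1
    calc ainv w = lam⁻¹ • (lam • ainv w) := by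
          rw [smul_smul, inv_mul_cancel₀ hlam0, one_smul]
    _ = lam⁻¹ • a w := by rw [h1]
  have hainvaw : ainv (a w) = w := by
    calc ainv (a w) = (ainv * a) w := rfl
    _ = w := by rw [hainva]; rfl
  -- the span of w and a w
  set p : Submodule L W := Submodule.span L {w, a w} with hpdef
  have hwp : w ∈ p := Submodule.subset_span (Set.mem_insert _ _)
  have hawp : a w ∈ p := Submodule.subset_span (Set.mem_insert_of_mem _ rfl)
  have step : ∀ (T : Module.End L W), T w ∈ p → T (a w) ∈ p → ∀ v ∈ p, T v ∈ p := by
    intro T h1 h2 v hv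
    have hle : p ≤ p.comap T := by
      rw [hpdef, Submodule.span_le]
      intro u hu
      simp only [Set.mem_insert_iff, Set.mem_singleton_iff] at hu
      rcases hu with rfl | rfl
      · exact h1
      · exact h2
    exact hle hv
  have hbot : p = ⊥ ∨ p = ⊤ := by
    apply aux_bot_or_top σ hsimp p
    intro x v hv
    obtain ⟨y, rfl⟩ := hf x
    let H : Subgroup (Gamma n) :=
      { carrier := {z | (∀ v ∈ p, φ z v ∈ p) ∧ (∀ v ∈ p, φ z⁻¹ v ∈ p)}
        one_mem' := by
          constructor <;> · intro v hv; simpa using hv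
        mul_mem' := by
          intro x y hx hy
          simp only [Set.mem_setOf_eq] at hx hy ⊢
          constructor
          · intro v hv
            have hxy : φ (x * y) v = φ x (φ y v) := by rw [map_mul]; rfl
            rw [hxy]; exact hx.1 _ (hy.1 v hv)
          · intro v hv
            have hxy : φ (x * y)⁻¹ v = φ y⁻¹ (φ x⁻¹ v) := by
              rw [mul_inv_rev, map_mul]; rfl
            rw [hxy]; exact hy.2 _ (hx.2 v hv)
        inv_mem' := by
          intro x hx
          simp only [Set.mem_setOf_eq] at hx ⊢
          refine ⟨hx.2, ?_⟩
          intro v hv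
          have : φ x⁻¹⁻¹ v = φ x v := by rw [inv_inv]
          rw [this]; exact hx.1 v hv }
    have hy := PresentedGroup.generated_by (GammaRels n) H ?_ y
    · exact hy.1 v hv
    · intro j
      fin_cases j
      · show (∀ v ∈ p, a v ∈ p) ∧ (∀ v ∈ p, ainv v ∈ p)
        constructor
        · exact step a hawp (by rw [haw2]; exact p.smul_mem lam hwp)
        · exact step ainv (by rw [hainvw]; exact p.smul_mem _ hawp)
            (by rw [hainvaw]; exact hwp)
      · show (∀ v ∈ p, b v ∈ p) ∧ (∀ v ∈ p, binv v ∈ p)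
        constructor
        · exact step b (by rw [hbw]; exact p.smul_mem _ hwp)
            (by rw [hbaw]; exact p.smul_mem _ hawp)
        · exact step binv (by rw [hbne.2]; exact p.smul_mem _ hwp)
            (by rw [hbawne.2]; exact p.smul_mem _ hawp)
      · show (∀ v ∈ p, e v ∈ p) ∧ (∀ v ∈ p, einv v ∈ p)
        constructor
        · exact step e (by rw [hew]; exact p.smul_mem _ hwp)
            (by rw [heaw]; exact p.smul_mem _ hawp)
        · exact step einv (by rw [hcne.2]; exact p.smul_mem _ hwp)
            (by rw [heawne.2]; exact p.smul_mem _ hawp)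
  rcases hbot with hb | hb
  · exact absurd ((Submodule.eq_bot_iff p).mp hb w hwp) hw0
  · have hfr : Module.finrank L W ≤ 2 := by
      rw [← finrank_top L W, ← hb, hpdef]
      have hcoe : ({w, a w} : Set W) = (↑({w, a w} : Finset W) : Set W) := by
        simp
      rw [hcoe]
      refine le_trans (finrank_span_finset_le_card ({w, a w} : Finset W)) ?_
      refine le_trans (Finset.card_insert_le _ _) ?_
      simp
    have hbc : Module.finrank L W = Module.finrank K V :=
      Module.finrank_baseChange (R := L) (S := K) (M' := V)
    rw [← hbc]
    exact hfr
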